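/- Assume x₀ has full orbit under G, G acts nontrivially on x₀, and fix a subgroup sequence {1} = G₀ < G₁ < ⋯ < G_m = G with coset leader sets CL_k. Then the following are equivalent: (i) for every g ∈ G every greedy run on the received vector g⁻¹x₀ has output equal to g; (ii) for every 1 ≤ k < m every induced coset leader in CL(G/G_k) is minimal. Moreover, when these hold there exists δ > 0 such that for every g ∈ G and every r with ‖r − g⁻¹x₀‖ < δ, every greedy run on r has output equal to g. -/

import Mathlib

open Set
open scoped Pointwise

noncomputable section

namespace GroupCode

variable {V : Type*} [NormedAddCommGroup V] [InnerProductSpace ℂ V]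

/-- The group of linear isometries of a complex inner product space. -/
abbrev Iso (V : Type*) [NormedAddCommGroup V] [InnerProductSpace ℂ V] := V ≃ₗᵢ[ℂ] V

/-- The stabilizer (isotropy) of `x₀` inside a subgroup `H`. -/
def Stab (x₀ : V) (H : Subgroup (Iso V)) : Set (Iso V) := {h | h ∈ H ∧ h x₀ = x₀}

/-- The fundamental region of a subgroup `H`. -/
def FR (x₀ : V) (H : Subgroup (Iso V)) : Set V :=
  {x | ∀ h ∈ H, h ∉ Stab x₀ H → ‖x - x₀‖ < ‖h x - x₀‖}

/-- The decoding region of a group element `g ∈ G`. -/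
def DR (x₀ : V) (G : Subgroup (Iso V)) (g : Iso V) : Set V :=
  {x | ∀ a ∈ G, a ∉ Stab x₀ G * ({g} : Set (Iso V)) → ‖g x - x₀‖ < ‖a x - x₀‖}

/-- `CL` is a set of coset leaders for `K` over `H`: a subset of `K` containing `1` and
exactly one element of each left coset of `H` in `K`. -/
def IsCosetLeaders (H K : Subgroup (Iso V)) (CL : Set (Iso V)) : Prop :=
  CL ⊆ (K : Set (Iso V)) ∧ (1 : Iso V) ∈ CL ∧ ∀ a ∈ K, ∃! c, c ∈ CL ∧ c⁻¹ * a ∈ H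

/-- Greed compatibility of a set of coset leaders for `K` over `H`. -/
def GreedCompatible (x₀ : V) (H K : Subgroup (Iso V)) (CL : Set (Iso V)) : Prop :=
  ∀ x ∈ FR x₀ H, ∃ c ∈ CL, c x ∈ FR x₀ K

/-- A coset leader `c` of `K` over `H` is minimal if `x₀ ∈ c(FR(H))`. -/
def Minimal (x₀ : V) (H : Subgroup (Iso V)) (c : Iso V) : Prop :=
  x₀ ∈ ⇑c '' FR x₀ H

/-- A coset leader `c` of `K` over `H` is region minimal if `FR(K) ⊆ c(FR(H))`. -/
def RegionMinimal (x₀ : V) (H K : Subgroup (Iso V)) (c : Iso V) : Prop :=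
  FR x₀ K ⊆ ⇑c '' FR x₀ H

/-- The product `d_k ⋯ d_1`. -/
def pprod {α : Type*} [Monoid α] (d : ℕ → α) (k : ℕ) : α :=
  (List.range k).foldl (fun acc j => d (j + 1) * acc) 1

/-- The product `cs_ℓ ⋯ cs_{k+1}` of induced coset leaders. -/
def pprodRange {α : Type*} [Monoid α] (cs : ℕ → α) (k ℓ : ℕ) : α :=
  (List.range (ℓ - k)).foldl (fun acc j => cs (k + 1 + j) * acc) 1

/-- A greedy run of the subgroup decoding algorithm on a received vector `r`:
at each step `k`, `d k ∈ CL k` minimizes the distance of `d (d_{k-1} ⋯ d_1 r)` to `x₀`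
over all `d ∈ CL k`. -/
def IsGreedyRun (x₀ : V) (CL : ℕ → Set (Iso V)) (m : ℕ) (r : V) (d : ℕ → Iso V) : Prop :=
  ∀ k < m, d (k + 1) ∈ CL (k + 1) ∧
    ∀ e ∈ CL (k + 1), ‖(d (k + 1)) ((pprod d k) r) - x₀‖ ≤ ‖e ((pprod d k) r) - x₀‖

end GroupCode

namespace GroupCode

section Aux
variable {α : Type*} [Group α]

theorem foldl_mul_right (f : ℕ → α) (l : List ℕ) (a b : α) :
    l.foldl (fun acc j => f j * acc) (a * b) = l.foldl (fun acc j => f j * acc) a * b := by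
  induction l generalizing a with
  | nil => rfl
  | cons x xs ih => simp only [List.foldl_cons, ← mul_assoc, ih]

@[simp] theorem pprod_zero (d : ℕ → α) : pprod d 0 = 1 := rfl

theorem pprod_succ (d : ℕ → α) (k : ℕ) : pprod d (k + 1) = d (k + 1) * pprod d k := by
  simp only [pprod, List.range_succ, List.foldl_append, List.foldl_cons, List.foldl_nil]

theorem pprod_congr {d d' : ℕ → α} {k : ℕ} (h : ∀ i, 1 ≤ i → i ≤ k → d i = d' i) :
    pprod d k = pprod d' k := by
  induction k with
  | zero => rfl
  | succ k ih =>
    rw [pprod_succ, pprod_succ, h (k+1) (by omega) le_rfl,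
      ih fun i h1 h2 => h i h1 (by omega)]

theorem pprod_ones {d : ℕ → α} {k : ℕ} (h : ∀ i, 1 ≤ i → i ≤ k → d i = 1) :
    pprod d k = 1 := by
  induction k with
  | zero => rfl
  | succ k ih =>
    rw [pprod_succ, h (k+1) (by omega) le_rfl, one_mul]
    exact ih fun i h1 h2 => h i h1 (by omega)

@[simp] theorem pprodRange_self (cs : ℕ → α) (k : ℕ) : pprodRange cs k k = 1 := by
  simp [pprodRange]

theorem pprodRange_of_le (cs : ℕ → α) {k ℓ : ℕ} (h : ℓ ≤ k) : pprodRange cs k ℓ = 1 := by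
  simp [pprodRange, Nat.sub_eq_zero_of_le h]

theorem pprodRange_succ (cs : ℕ → α) {k ℓ : ℕ} (h : k ≤ ℓ) :
    pprodRange cs k (ℓ + 1) = cs (ℓ + 1) * pprodRange cs k ℓ := by
  simp only [pprodRange]
  rw [show ℓ + 1 - k = (ℓ - k) + 1 by omega, List.range_succ]
  simp only [List.foldl_append, List.foldl_cons, List.foldl_nil]
  rw [show k + 1 + (ℓ - k) = ℓ + 1 by omega]

theorem pprodRange_mul_pprod (b : ℕ → α) {k ℓ : ℕ} (h : k ≤ ℓ) :
    pprodRange b k ℓ * pprod b k = pprod b ℓ := by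
  induction ℓ, h using Nat.le_induction with
  | base => simp
  | succ ℓ hkl ih =>
    rw [pprodRange_succ b hkl, pprod_succ, mul_assoc, ih]

theorem pprodRange_succ_bot (cs : ℕ → α) {k ℓ : ℕ} (h : k < ℓ) :
    pprodRange cs k ℓ = pprodRange cs (k+1) ℓ * cs (k + 1) := by
  have h1 := pprodRange_mul_pprod cs (le_of_lt h)
  have h2 := pprodRange_mul_pprod cs (show k + 1 ≤ ℓ from h)
  rw [pprod_succ] at h2
  have : pprodRange cs k ℓ * pprod cs k
      = (pprodRange cs (k+1) ℓ * cs (k+1)) * pprod cs k := by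
    rw [mul_assoc, h1, h2]
  exact mul_right_cancel this

theorem pprodRange_congr {cs cs' : ℕ → α} {k : ℕ} :
    ∀ {ℓ : ℕ}, (∀ i, k < i → i ≤ ℓ → cs i = cs' i) →
    pprodRange cs k ℓ = pprodRange cs' k ℓ := by
  intro ℓ
  induction ℓ with
  | zero => intro _; rw [pprodRange_of_le _ (Nat.zero_le k), pprodRange_of_le _ (Nat.zero_le k)]
  | succ ℓ ih =>
    intro h
    rcases le_or_gt (ℓ + 1) k with hle | hlt
    · rw [pprodRange_of_le _ hle, pprodRange_of_le _ hle]
    · rw [pprodRange_succ _ (by omega), pprodRange_succ _ (by omega),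
        h (ℓ+1) (by omega) le_rfl, ih (fun i h1 h2 => h i h1 (by omega))]

theorem pprodRange_ones {cs : ℕ → α} {k : ℕ} :
    ∀ {ℓ : ℕ}, (∀ i, k < i → i ≤ ℓ → cs i = 1) → pprodRange cs k ℓ = 1 := by
  intro ℓ
  induction ℓ with
  | zero => intro _; exact pprodRange_of_le _ (Nat.zero_le k)
  | succ ℓ ih =>
    intro h
    rcases le_or_gt (ℓ + 1) k with hle | hlt
    · exact pprodRange_of_le _ hle
    · rw [pprodRange_succ _ (by omega), h (ℓ+1) (by omega) le_rfl, one_mul,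
        ih (fun i h1 h2 => h i h1 (by omega))]

end Aux
end GroupCode

namespace GroupCode
section Main
variable {V : Type*} [NormedAddCommGroup V] [InnerProductSpace ℂ V]
variable {G : Subgroup (Iso V)} {x₀ : V} {m : ℕ} {Gs : ℕ → Subgroup (Iso V)}
  {CL : ℕ → Set (Iso V)}

theorem chain_le (hlt : ∀ k < m, Gs k < Gs (k + 1)) :
    ∀ {k ℓ : ℕ}, k ≤ ℓ → ℓ ≤ m → Gs k ≤ Gs ℓ := by
  intro k ℓ hkl hlm
  induction ℓ, hkl using Nat.le_induction with
  | base => exact le_rfl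
  | succ ℓ hkl ih =>
    exact (ih (by omega)).trans (le_of_lt (hlt ℓ (by omega)))

theorem CL_subset (hCL : ∀ k < m, IsCosetLeaders (Gs k) (Gs (k + 1)) (CL (k + 1))) :
    ∀ {i : ℕ}, 1 ≤ i → i ≤ m → CL i ⊆ (Gs i : Set (Iso V)) := by
  intro i h1 h2
  obtain ⟨j, rfl⟩ : ∃ j, i = j + 1 := ⟨i - 1, by omega⟩
  exact (hCL j (by omega)).1

theorem one_mem_CL (hCL : ∀ k < m, IsCosetLeaders (Gs k) (Gs (k + 1)) (CL (k + 1))) :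
    ∀ {i : ℕ}, 1 ≤ i → i ≤ m → (1 : Iso V) ∈ CL i := by
  intro i h1 h2
  obtain ⟨j, rfl⟩ : ∃ j, i = j + 1 := ⟨i - 1, by omega⟩
  exact (hCL j (by omega)).2.1

theorem stab_triv (hfull : Stab x₀ G = ({1} : Set (Iso V))) :
    ∀ {h : Iso V}, h ∈ G → h x₀ = x₀ → h = 1 := by
  intro h hG hx
  have : h ∈ Stab x₀ G := ⟨hG, hx⟩
  rwa [hfull, Set.mem_singleton_iff] at this

theorem mem_FR_iff (hfull : Stab x₀ G = ({1} : Set (Iso V)))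
    {H : Subgroup (Iso V)} (hHG : H ≤ G) {x : V} :
    x ∈ FR x₀ H ↔ ∀ h ∈ H, h ≠ (1 : Iso V) → ‖x - x₀‖ < ‖h x - x₀‖ := by
  constructor
  · intro hx h hh hne
    refine hx h hh ?_
    rintro ⟨_, hfix⟩
    exact hne (stab_triv hfull (hHG hh) hfix)
  · intro hx h hh hns
    refine hx h hh ?_
    rintro rfl
    exact hns ⟨hh, rfl⟩

theorem pprod_mem (hlt : ∀ k < m, Gs k < Gs (k + 1))
    (hCL : ∀ k < m, IsCosetLeaders (Gs k) (Gs (k + 1)) (CL (k + 1)))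
    {b : ℕ → Iso V} :
    ∀ {k : ℕ}, k ≤ m → (∀ i, 1 ≤ i → i ≤ k → b i ∈ CL i) → pprod b k ∈ Gs k := by
  intro k
  induction k with
  | zero => intro _ _; exact Subgroup.one_mem _
  | succ k ih =>
    intro hk hb
    rw [pprod_succ]
    have h1 : b (k+1) ∈ Gs (k+1) := CL_subset hCL (by omega) hk (hb (k+1) (by omega) le_rfl)
    have h2 : pprod b k ∈ Gs k := ih (by omega) (fun i u v => hb i u (by omega))
    exact Subgroup.mul_mem _ h1 ((le_of_lt (hlt k (by omega))) h2)

theorem pprodRange_mem (hlt : ∀ k < m, Gs k < Gs (k + 1))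
    (hCL : ∀ k < m, IsCosetLeaders (Gs k) (Gs (k + 1)) (CL (k + 1)))
    {cs : ℕ → Iso V} {k : ℕ} :
    ∀ {ℓ : ℕ}, ℓ ≤ m → (∀ i, k < i → i ≤ ℓ → cs i ∈ CL i) → pprodRange cs k ℓ ∈ Gs ℓ := by
  intro ℓ
  induction ℓ with
  | zero => intro _ _; rw [pprodRange_of_le cs (Nat.zero_le k)]; exact Subgroup.one_mem _
  | succ ℓ ih =>
    intro hℓ hcs
    rcases le_or_gt (ℓ + 1) k with hle | hlt'
    · rw [pprodRange_of_le cs hle]; exact Subgroup.one_mem _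
    · rw [pprodRange_succ cs (by omega)]
      have h1 : cs (ℓ+1) ∈ Gs (ℓ+1) :=
        CL_subset hCL (by omega) hℓ (hcs (ℓ+1) (by omega) le_rfl)
      have h2 : pprodRange cs k ℓ ∈ Gs ℓ := ih (by omega) (fun i u v => hcs i u (by omega))
      exact Subgroup.mul_mem _ h1 ((le_of_lt (hlt ℓ (by omega))) h2)

end Main
end GroupCode

namespace GroupCode
section Main2
variable {V : Type*} [NormedAddCommGroup V] [InnerProductSpace ℂ V]
variable {G : Subgroup (Iso V)} {x₀ : V} {m : ℕ} {Gs : ℕ → Subgroup (Iso V)}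
  {CL : ℕ → Set (Iso V)}

theorem factor_exists (hCL : ∀ k < m, IsCosetLeaders (Gs k) (Gs (k + 1)) (CL (k + 1)))
    (hG0 : Gs 0 = ⊥) :
    ∀ {k : ℕ}, k ≤ m → ∀ a ∈ Gs k, ∃ b : ℕ → Iso V,
      (∀ i, 1 ≤ i → i ≤ m → b i ∈ CL i) ∧ (∀ i, k < i → b i = 1) ∧ pprod b k = a := by
  intro k
  induction k with
  | zero =>
    intro _ a ha
    rw [hG0, Subgroup.mem_bot] at ha
    exact ⟨fun _ => 1, fun i h1 h2 => one_mem_CL hCL h1 h2, fun _ _ => rfl,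
      by rw [pprod_ones (fun _ _ _ => rfl), ha]⟩
  | succ k ih =>
    intro hk a ha
    obtain ⟨c, ⟨hcCL, hc⟩, _⟩ := (hCL k (by omega)).2.2 a ha
    obtain ⟨b₀, hb₀CL, hb₀1, hb₀p⟩ := ih (by omega) (c⁻¹ * a) hc
    refine ⟨fun i => if i = k + 1 then c else b₀ i, ?_, ?_, ?_⟩
    · intro i h1 h2
      by_cases hi : i = k + 1
      · simpa [hi] using hcCL
      · simpa [hi] using hb₀CL i h1 h2
    · intro i hi
      have : i ≠ k + 1 := by omega
      simp only [this, if_false]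
      exact hb₀1 i (by omega)
    · have hcon : pprod (fun i => if i = k + 1 then c else b₀ i) k = pprod b₀ k :=
        pprod_congr (fun i h1 h2 => by simp [show i ≠ k + 1 by omega])
      rw [pprod_succ, hcon, hb₀p]
      simp

theorem factor_unique (hlt : ∀ k < m, Gs k < Gs (k + 1))
    (hCL : ∀ k < m, IsCosetLeaders (Gs k) (Gs (k + 1)) (CL (k + 1))) :
    ∀ {k : ℕ}, k ≤ m → ∀ {b b' : ℕ → Iso V},
      (∀ i, 1 ≤ i → i ≤ k → b i ∈ CL i) → (∀ i, 1 ≤ i → i ≤ k → b' i ∈ CL i) →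
      pprod b k = pprod b' k → ∀ i, 1 ≤ i → i ≤ k → b i = b' i := by
  intro k
  induction k with
  | zero => intro _ _ _ _ _ _ i h1 h2; omega
  | succ k ih =>
    intro hk b b' hb hb' hpp i h1 h2
    have ha : pprod b (k+1) ∈ Gs (k+1) := pprod_mem hlt hCL hk hb
    have hmem : b (k+1) ∈ CL (k+1) ∧ (b (k+1))⁻¹ * pprod b (k+1) ∈ Gs k := by
      refine ⟨hb (k+1) (by omega) le_rfl, ?_⟩
      rw [pprod_succ, ← mul_assoc, inv_mul_cancel, one_mul]
      exact pprod_mem hlt hCL (by omega) (fun i u v => hb i u (by omega))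
    have hmem' : b' (k+1) ∈ CL (k+1) ∧ (b' (k+1))⁻¹ * pprod b (k+1) ∈ Gs k := by
      refine ⟨hb' (k+1) (by omega) le_rfl, ?_⟩
      rw [hpp, pprod_succ, ← mul_assoc, inv_mul_cancel, one_mul]
      exact pprod_mem hlt hCL (by omega) (fun i u v => hb' i u (by omega))
    obtain ⟨c, -, huniq⟩ := (hCL k (by omega)).2.2 _ ha
    have heq : b (k+1) = b' (k+1) := by
      rw [huniq _ hmem, huniq _ hmem']
    have hcan : pprod b k = pprod b' k := by
      have := hpp
      rw [pprod_succ, pprod_succ, heq] at this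
      exact mul_left_cancel this
    rcases Nat.lt_or_ge i (k+1) with hik | hik
    · exact ih (by omega) (fun j u v => hb j u (by omega)) (fun j u v => hb' j u (by omega))
        hcan i h1 (by omega)
    · have : i = k + 1 := by omega
      rw [this, heq]

end Main2
end GroupCode

namespace GroupCode
section Main3
variable {V : Type*} [NormedAddCommGroup V] [InnerProductSpace ℂ V]
variable {G : Subgroup (Iso V)} {x₀ : V} {m : ℕ} {Gs : ℕ → Subgroup (Iso V)}
  {CL : ℕ → Set (Iso V)}

/-- Any greedy prefix extends to a full greedy run. -/
theorem greedy_extend (hGfin : (G : Set (Iso V)).Finite) (hGm : Gs m = G)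
    (hlt : ∀ k < m, Gs k < Gs (k + 1))
    (hCL : ∀ k < m, IsCosetLeaders (Gs k) (Gs (k + 1)) (CL (k + 1))) (r : V) :
    ∀ (j k₀ : ℕ) (d₀ : ℕ → Iso V), m ≤ k₀ + j →
      (∀ k < m, k < k₀ → d₀ (k + 1) ∈ CL (k + 1) ∧
        ∀ e ∈ CL (k + 1), ‖(d₀ (k + 1)) ((pprod d₀ k) r) - x₀‖ ≤ ‖e ((pprod d₀ k) r) - x₀‖) →
      ∃ d : ℕ → Iso V, IsGreedyRun x₀ CL m r d ∧ ∀ i ≤ k₀, d i = d₀ i := by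
  intro j
  induction j with
  | zero =>
    intro k₀ d₀ hj hpre
    exact ⟨d₀, fun k hk => hpre k hk (by omega), fun i _ => rfl⟩
  | succ j ih =>
    intro k₀ d₀ hj hpre
    rcases le_or_gt m k₀ with hmk | hmk
    · exact ⟨d₀, fun k hk => hpre k hk (by omega), fun i _ => rfl⟩
    · have hfin : (CL (k₀ + 1)).Finite :=
        hGfin.subset (fun c hc => by
          have := CL_subset hCL (by omega) (by omega) hc
          rw [← hGm]
          exact chain_le hlt (by omega) le_rfl this)
      have hne : (CL (k₀ + 1)).Nonempty := ⟨1, one_mem_CL hCL (by omega) (by omega)⟩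
      obtain ⟨c, hc, hcmin⟩ :=
        Set.exists_min_image (CL (k₀ + 1)) (fun e => ‖e ((pprod d₀ k₀) r) - x₀‖) hfin hne
      set d₁ : ℕ → Iso V := Function.update d₀ (k₀ + 1) c with hd₁
      have hagree : ∀ i ≤ k₀, d₁ i = d₀ i := by
        intro i hi
        exact Function.update_of_ne (by omega) _ _
      have hpp : ∀ k ≤ k₀, pprod d₁ k = pprod d₀ k := by
        intro k hk
        exact pprod_congr (fun i h1 h2 => hagree i (by omega))
      have hpre1 : ∀ k < m, k < k₀ + 1 → d₁ (k + 1) ∈ CL (k + 1) ∧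
          ∀ e ∈ CL (k + 1), ‖(d₁ (k + 1)) ((pprod d₁ k) r) - x₀‖ ≤ ‖e ((pprod d₁ k) r) - x₀‖ := by
        intro k hk hk'
        rcases Nat.lt_or_ge k k₀ with h | h
        · rw [hpp k (by omega), hagree (k + 1) (by omega)]
          exact hpre k hk h
        · have hk0 : k = k₀ := by omega
          subst hk0
          rw [hpp k (by omega)]
          have : d₁ (k + 1) = c := Function.update_self _ _ _
          rw [this]
          exact ⟨hc, hcmin⟩
      obtain ⟨d, hrun, hag⟩ := ih (k₀ + 1) d₁ (by omega) hpre1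
      exact ⟨d, hrun, fun i hi => by rw [hag i (by omega), hagree i hi]⟩

end Main3
end GroupCode

namespace GroupCode
section Main4
variable {V : Type*} [NormedAddCommGroup V] [InnerProductSpace ℂ V]
variable {G : Subgroup (Iso V)} {x₀ : V} {m : ℕ} {Gs : ℕ → Subgroup (Iso V)}
  {CL : ℕ → Set (Iso V)}

theorem x0_mem_FR (hfull : Stab x₀ G = ({1} : Set (Iso V)))
    {H : Subgroup (Iso V)} (hHG : H ≤ G) : x₀ ∈ FR x₀ H := by
  rw [mem_FR_iff hfull hHG]
  intro h hh hne
  have : h x₀ ≠ x₀ := fun e => hne (stab_triv hfull (hHG hh) e)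
  rw [sub_self, norm_zero]
  rw [norm_pos_iff, sub_ne_zero]
  exact this

/-- Under minimality of all induced coset leaders, the factorization component is the
strict minimizer at each exact point. -/
theorem strict_min (hfull : Stab x₀ G = ({1} : Set (Iso V)))
    (hGm : Gs m = G) (hlt : ∀ k < m, Gs k < Gs (k + 1))
    (hCL : ∀ k < m, IsCosetLeaders (Gs k) (Gs (k + 1)) (CL (k + 1)))
    (hMin : ∀ k, 1 ≤ k → k < m → ∀ cs : ℕ → Iso V,
      (∀ i, k < i → i ≤ m → cs i ∈ CL i) → Minimal x₀ (Gs k) (pprodRange cs k m))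
    {b : ℕ → Iso V} (hb : ∀ i, 1 ≤ i → i ≤ m → b i ∈ CL i)
    {k : ℕ} (hk : k < m) {e : Iso V} (he : e ∈ CL (k + 1)) (hne : e ≠ b (k + 1)) :
    ‖(pprodRange b (k+1) m)⁻¹ x₀ - x₀‖ < ‖(e * (pprodRange b k m)⁻¹) x₀ - x₀‖ := by
  set A' := pprodRange b (k+1) m with hA'
  have hGsG : ∀ {j : ℕ}, j ≤ m → Gs j ≤ G := fun hj => hGm ▸ chain_le hlt hj le_rfl
  -- x' := A'⁻¹ x₀ lies in FR (Gs (k+1))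
  have hx' : A'⁻¹ x₀ ∈ FR x₀ (Gs (k + 1)) := by
    rcases Nat.lt_or_ge (k + 1) m with hk1 | hk1
    · have := hMin (k+1) (by omega) hk1 b (fun i u v => hb i (by omega) v)
      obtain ⟨z, hz, hz'⟩ := this
      have : z = A'⁻¹ x₀ := by rw [← hz']; simp [hA']
      rwa [← this]
    · have : k + 1 = m := by omega
      subst this
      have : A' = 1 := pprodRange_self b (k+1) ▸ rfl
      rw [this]
      simpa using x0_mem_FR hfull (le_of_eq hGm)
  -- the moving element
  have hbk : b (k+1) ∈ Gs (k+1) := CL_subset hCL (by omega) (by omega) (hb (k+1) (by omega) (by omega))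
  have heG : e ∈ Gs (k+1) := CL_subset hCL (by omega) (by omega) he
  have hw : e * (b (k+1))⁻¹ ∈ Gs (k+1) := Subgroup.mul_mem _ heG (Subgroup.inv_mem _ hbk)
  have hwne : e * (b (k+1))⁻¹ ≠ 1 := by
    intro h
    exact hne (by rwa [mul_inv_eq_one] at h)
  have key := (mem_FR_iff hfull (hGsG (by omega))).1 hx' _ hw hwne
  have hsplit : pprodRange b k m = A' * b (k+1) := pprodRange_succ_bot b hk
  have h1 : (e * (b (k+1))⁻¹) (A'⁻¹ x₀) = (e * (pprodRange b k m)⁻¹) x₀ := by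
    rw [hsplit]
    have : e * (b (k+1))⁻¹ * A'⁻¹ = e * (A' * b (k+1))⁻¹ := by group
    calc (e * (b (k+1))⁻¹) (A'⁻¹ x₀) = ((e * (b (k+1))⁻¹) * A'⁻¹) x₀ := rfl
      _ = (e * (A' * b (k+1))⁻¹) x₀ := by rw [this]
  rw [h1] at key
  exact key

end Main4
end GroupCode

namespace GroupCode
section Main5
variable {V : Type*} [NormedAddCommGroup V] [InnerProductSpace ℂ V]
variable {G : Subgroup (Iso V)} {x₀ : V} {m : ℕ} {Gs : ℕ → Subgroup (Iso V)}
  {CL : ℕ → Set (Iso V)}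

/-- The components of any greedy run on `g⁻¹ x₀` agree with the factorization of `g`,
assuming minimality of all induced coset leaders. -/
theorem greedy_eq_factor_of_min (hfull : Stab x₀ G = ({1} : Set (Iso V)))
    (hGm : Gs m = G) (hlt : ∀ k < m, Gs k < Gs (k + 1))
    (hCL : ∀ k < m, IsCosetLeaders (Gs k) (Gs (k + 1)) (CL (k + 1)))
    (hMin : ∀ k, 1 ≤ k → k < m → ∀ cs : ℕ → Iso V,
      (∀ i, k < i → i ≤ m → cs i ∈ CL i) → Minimal x₀ (Gs k) (pprodRange cs k m))
    {g : Iso V} (hg : g ∈ G) {b : ℕ → Iso V}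
    (hb : ∀ i, 1 ≤ i → i ≤ m → b i ∈ CL i) (hbg : pprod b m = g)
    {d : ℕ → Iso V} (hd : IsGreedyRun x₀ CL m (g⁻¹ x₀) d) :
    ∀ k ≤ m, ∀ i, 1 ≤ i → i ≤ k → d i = b i := by
  intro k
  induction k with
  | zero => intro _ i h1 h2; omega
  | succ k ih =>
    intro hk i h1 h2
    have ihk : ∀ i, 1 ≤ i → i ≤ k → d i = b i := ih (by omega)
    rcases Nat.lt_or_ge i (k + 1) with hik | hik
    · exact ihk i h1 (by omega)
    have hieq : i = k + 1 := by omega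
    subst hieq
    -- the exact point after k steps
    have hpp : pprod d k = pprod b k := pprod_congr ihk
    obtain ⟨hdCL, hdmin⟩ := hd k (by omega)
    have hAg : pprodRange b k m * pprod b k = g := by
      rw [pprodRange_mul_pprod b (by omega), hbg]
    have hptex : pprod b k * g⁻¹ = (pprodRange b k m)⁻¹ := by
      rw [← hAg]; group
    have hpt : (pprod d k) (g⁻¹ x₀) = (pprodRange b k m)⁻¹ x₀ := by
      rw [hpp]
      calc (pprod b k) (g⁻¹ x₀) = (pprod b k * g⁻¹) x₀ := rfl
        _ = (pprodRange b k m)⁻¹ x₀ := by rw [hptex]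
    by_contra hcon
    have hstrict := strict_min hfull hGm hlt hCL hMin hb (show k < m by omega) hdCL hcon
    have hb1 : ‖(b (k+1)) ((pprod d k) (g⁻¹ x₀)) - x₀‖ = ‖(pprodRange b (k+1) m)⁻¹ x₀ - x₀‖ := by
      rw [hpt]
      have hsplit : pprodRange b k m = pprodRange b (k+1) m * b (k+1) :=
        pprodRange_succ_bot b (by omega)
      have hx : b (k+1) * (pprodRange b k m)⁻¹ = (pprodRange b (k+1) m)⁻¹ := by
        rw [hsplit]; group
      calc ‖(b (k+1)) ((pprodRange b k m)⁻¹ x₀) - x₀‖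
          = ‖(b (k+1) * (pprodRange b k m)⁻¹) x₀ - x₀‖ := rfl
        _ = ‖(pprodRange b (k+1) m)⁻¹ x₀ - x₀‖ := by rw [hx]
    have hd1 : ‖(d (k+1)) ((pprod d k) (g⁻¹ x₀)) - x₀‖
        = ‖(d (k+1) * (pprodRange b k m)⁻¹) x₀ - x₀‖ := by
      rw [hpt]; rfl
    have hle := hdmin (b (k+1)) (hb (k+1) (by omega) (by omega))
    rw [hd1, hb1] at hle
    exact absurd hstrict (not_lt.2 hle)

theorem correct_of_min (hfull : Stab x₀ G = ({1} : Set (Iso V)))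
    (hG0 : Gs 0 = ⊥) (hGm : Gs m = G) (hlt : ∀ k < m, Gs k < Gs (k + 1))
    (hCL : ∀ k < m, IsCosetLeaders (Gs k) (Gs (k + 1)) (CL (k + 1)))
    (hMin : ∀ k, 1 ≤ k → k < m → ∀ cs : ℕ → Iso V,
      (∀ i, k < i → i ≤ m → cs i ∈ CL i) → Minimal x₀ (Gs k) (pprodRange cs k m)) :
    ∀ g ∈ G, ∀ d : ℕ → Iso V, IsGreedyRun x₀ CL m (g⁻¹ x₀) d → pprod d m = g := by
  intro g hg d hd
  obtain ⟨b, hb, -, hbg⟩ := factor_exists hCL hG0 le_rfl g (hGm ▸ hg)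
  have := greedy_eq_factor_of_min hfull hGm hlt hCL hMin hg hb hbg hd m le_rfl
  rw [pprod_congr (fun i u v => this i u v), hbg]

end Main5
end GroupCode

namespace GroupCode
section Main6
variable {V : Type*} [NormedAddCommGroup V] [InnerProductSpace ℂ V]
variable {G : Subgroup (Iso V)} {x₀ : V} {m : ℕ} {Gs : ℕ → Subgroup (Iso V)}
  {CL : ℕ → Set (Iso V)}

theorem min_of_correct (hGfin : (G : Set (Iso V)).Finite)
    (hfull : Stab x₀ G = ({1} : Set (Iso V)))
    (hG0 : Gs 0 = ⊥) (hGm : Gs m = G) (hlt : ∀ k < m, Gs k < Gs (k + 1))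
    (hCL : ∀ k < m, IsCosetLeaders (Gs k) (Gs (k + 1)) (CL (k + 1)))
    (hCor : ∀ g ∈ G, ∀ d : ℕ → Iso V, IsGreedyRun x₀ CL m (g⁻¹ x₀) d → pprod d m = g) :
    ∀ k, 1 ≤ k → k < m → ∀ cs : ℕ → Iso V,
      (∀ i, k < i → i ≤ m → cs i ∈ CL i) → Minimal x₀ (Gs k) (pprodRange cs k m) := by
  intro k hk1 hkm cs hcs
  have hGsG : ∀ {j : ℕ}, j ≤ m → Gs j ≤ G := fun hj => hGm ▸ chain_le hlt hj le_rfl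
  refine ⟨(pprodRange cs k m)⁻¹ x₀, ?_, by simp⟩
  rw [mem_FR_iff hfull (hGsG (by omega))]
  intro h hh hne1
  by_contra hcon
  push_neg at hcon
  -- set up the codeword g = A * h⁻¹
  have hAG : pprodRange cs k m ∈ G := hGm ▸ pprodRange_mem hlt hCL le_rfl hcs
  have hgG : pprodRange cs k m * h⁻¹ ∈ G :=
    Subgroup.mul_mem _ hAG (Subgroup.inv_mem _ (hGsG (by omega) hh))
  obtain ⟨b₀, hb₀CL, hb₀1, hb₀p⟩ :=
    factor_exists hCL hG0 (le_of_lt hkm) h⁻¹ (Subgroup.inv_mem _ hh)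
  set g : Iso V := pprodRange cs k m * h⁻¹ with hgdef
  set b : ℕ → Iso V := fun i => if i ≤ k then b₀ i else cs i with hbdef
  have hbCL : ∀ i, 1 ≤ i → i ≤ m → b i ∈ CL i := by
    intro i h1 h2
    by_cases hik : i ≤ k
    · simpa [hbdef, hik] using hb₀CL i h1 h2
    · simpa [hbdef, hik] using hcs i (by omega) h2
  have hbk : pprod b k = h⁻¹ := by
    rw [pprod_congr (d' := b₀) (fun i u v => by simp [hbdef, v]), hb₀p]
  have hbA : pprodRange b k m = pprodRange cs k m :=
    pprodRange_congr (cs' := cs) (fun i u v => by simp [hbdef, show ¬ i ≤ k by omega])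
  have hbg : pprod b m = g := by
    rw [← pprodRange_mul_pprod b (le_of_lt hkm), hbk, hbA]
  -- a greedy run on g⁻¹ x₀
  obtain ⟨d, hrun, -⟩ :=
    greedy_extend hGfin hGm hlt hCL (g⁻¹ x₀) m 0 (fun _ => 1) (by omega)
      (fun t ht ht0 => by omega)
  have hdg : pprod d m = g := hCor g hgG d hrun
  have hdCL : ∀ i, 1 ≤ i → i ≤ m → d i ∈ CL i := by
    intro i h1 h2
    obtain ⟨t, rfl⟩ : ∃ t, i = t + 1 := ⟨i - 1, by omega⟩
    exact (hrun t (by omega)).1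
  have hdb : ∀ i, 1 ≤ i → i ≤ m → d i = b i :=
    factor_unique hlt hCL le_rfl hdCL hbCL (by rw [hdg, hbg])
  -- the basepoint identities
  have hr : g⁻¹ x₀ = h ((pprodRange cs k m)⁻¹ x₀) := by
    have : g⁻¹ = h * (pprodRange cs k m)⁻¹ := by rw [hgdef]; group
    rw [this]; rfl
  -- values along the run
  have hstep : ∀ j < m, ‖(pprod d (j+1)) (g⁻¹ x₀) - x₀‖ ≤ ‖(pprod d j) (g⁻¹ x₀) - x₀‖ := by
    intro j hj
    have h1 := (hrun j hj).2 1 (one_mem_CL hCL (by omega) (by omega))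
    have e1 : (1 : Iso V) ((pprod d j) (g⁻¹ x₀)) = (pprod d j) (g⁻¹ x₀) := rfl
    have e2 : (pprod d (j+1)) (g⁻¹ x₀) = (d (j+1)) ((pprod d j) (g⁻¹ x₀)) := by
      rw [pprod_succ]; rfl
    rw [e1] at h1
    rw [e2]
    exact h1
  have hchain : ∀ p q, p ≤ q → q ≤ m →
      ‖(pprod d q) (g⁻¹ x₀) - x₀‖ ≤ ‖(pprod d p) (g⁻¹ x₀) - x₀‖ := by
    intro p q hpq hqm
    induction q, hpq using Nat.le_induction with
    | base => exact le_rfl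
    | succ q hpq ih => exact (hstep q (by omega)).trans (ih (by omega))
  have hv0 : (pprod d 0) (g⁻¹ x₀) = h ((pprodRange cs k m)⁻¹ x₀) := by
    rw [show pprod d 0 = 1 from rfl, hr]; rfl
  have hvk : (pprod d k) (g⁻¹ x₀) = (pprodRange cs k m)⁻¹ x₀ := by
    have : pprod d k = h⁻¹ := by
      rw [pprod_congr (d' := b) (fun i u v => hdb i u (by omega)), hbk]
    rw [this, hr]
    calc (h⁻¹ : Iso V) (h ((pprodRange cs k m)⁻¹ x₀))
        = (h⁻¹ * h) ((pprodRange cs k m)⁻¹ x₀) := rfl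
      _ = (pprodRange cs k m)⁻¹ x₀ := by rw [inv_mul_cancel]; rfl
  -- all values equal up to k
  have hvconst : ∀ j ≤ k, ‖(pprod d j) (g⁻¹ x₀) - x₀‖ = ‖(pprod d 0) (g⁻¹ x₀) - x₀‖ := by
    intro j hj
    have h1 : ‖(pprod d j) (g⁻¹ x₀) - x₀‖ ≤ ‖(pprod d 0) (g⁻¹ x₀) - x₀‖ :=
      hchain 0 j (by omega) (by omega)
    have h2 : ‖(pprod d k) (g⁻¹ x₀) - x₀‖ ≤ ‖(pprod d j) (g⁻¹ x₀) - x₀‖ :=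
      hchain j k hj (by omega)
    have h3 : ‖(pprod d 0) (g⁻¹ x₀) - x₀‖ ≤ ‖(pprod d k) (g⁻¹ x₀) - x₀‖ := by
      rw [hv0, hvk]; exact hcon
    linarith
  -- find the first nontrivial component
  have hbne : ∃ j, 1 ≤ j ∧ j ≤ k ∧ b j ≠ 1 := by
    by_contra hall
    push_neg at hall
    have : pprod b k = 1 := pprod_ones (fun i u v => hall i u v)
    rw [hbk] at this
    exact hne1 (by rw [← inv_inv h, this, inv_one])
  classical
  obtain ⟨j, hPj, hjmin⟩ : ∃ j, (1 ≤ j ∧ j ≤ k ∧ b j ≠ 1) ∧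
      ∀ i < j, ¬(1 ≤ i ∧ i ≤ k ∧ b i ≠ 1) :=
    ⟨Nat.find hbne, Nat.find_spec hbne, fun i hi => Nat.find_min hbne hi⟩
  obtain ⟨j', rfl⟩ : ∃ j', j = j' + 1 := ⟨j - 1, by omega⟩
  obtain ⟨hj1, hjk, hbj⟩ := hPj
  have hdone : ∀ i, 1 ≤ i → i ≤ j' → d i = 1 := by
    intro i h1 h2
    have : ¬(1 ≤ i ∧ i ≤ k ∧ b i ≠ 1) := hjmin i (by omega)
    push_neg at this
    rw [hdb i h1 (by omega)]
    exact this h1 (by omega)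
  have hppj' : pprod d j' = 1 := pprod_ones hdone
  -- the tie at step j'
  have htie : ∀ e ∈ CL (j' + 1),
      ‖(1 : Iso V) ((pprod d j') (g⁻¹ x₀)) - x₀‖ ≤ ‖e ((pprod d j') (g⁻¹ x₀)) - x₀‖ := by
    intro e he
    have hmin := (hrun j' (by omega)).2 e he
    have heq : ‖(d (j'+1)) ((pprod d j') (g⁻¹ x₀)) - x₀‖
        = ‖(pprod d j') (g⁻¹ x₀) - x₀‖ := by
      have e2 : (pprod d (j'+1)) (g⁻¹ x₀) = (d (j'+1)) ((pprod d j') (g⁻¹ x₀)) := by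
        rw [pprod_succ]; rfl
      rw [← e2, hvconst (j'+1) hjk, ← hvconst j' (by omega)]
    calc ‖(1 : Iso V) ((pprod d j') (g⁻¹ x₀)) - x₀‖
        = ‖(d (j'+1)) ((pprod d j') (g⁻¹ x₀)) - x₀‖ := heq.symm
      _ ≤ ‖e ((pprod d j') (g⁻¹ x₀)) - x₀‖ := hmin
  -- build an alternative greedy run choosing 1 at step j'+1
  set d₀ : ℕ → Iso V := fun i => if i = j' + 1 then 1 else d i with hd₀def
  have hd₀agree : ∀ i, i ≤ j' → d₀ i = d i := fun i hi => by
    simp [hd₀def, show i ≠ j' + 1 by omega]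
  have hd₀pp : ∀ t ≤ j', pprod d₀ t = pprod d t :=
    fun t ht => pprod_congr (fun i u v => hd₀agree i (by omega))
  have hpre : ∀ t < m, t < j' + 1 → d₀ (t + 1) ∈ CL (t + 1) ∧
      ∀ e ∈ CL (t + 1), ‖(d₀ (t + 1)) ((pprod d₀ t) (g⁻¹ x₀)) - x₀‖
        ≤ ‖e ((pprod d₀ t) (g⁻¹ x₀)) - x₀‖ := by
    intro t htm htj
    rcases Nat.lt_or_ge t j' with ht | ht
    · have : d₀ (t + 1) = d (t + 1) := by simp [hd₀def, show t + 1 ≠ j' + 1 by omega, show t ≠ j' by omega]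
      rw [this, hd₀pp t (by omega)]
      exact hrun t htm
    · have htj' : t = j' := by omega
      subst htj'
      have : d₀ (t + 1) = 1 := by simp [hd₀def]
      rw [this, hd₀pp t le_rfl]
      exact ⟨one_mem_CL hCL (by omega) (by omega), htie⟩
  obtain ⟨d', hrun', hag'⟩ :=
    greedy_extend hGfin hGm hlt hCL (g⁻¹ x₀) m (j' + 1) d₀ (by omega) hpre
  have hd'CL : ∀ i, 1 ≤ i → i ≤ m → d' i ∈ CL i := by
    intro i h1 h2
    obtain ⟨t, rfl⟩ : ∃ t, i = t + 1 := ⟨i - 1, by omega⟩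
    exact (hrun' t (by omega)).1
  have hd'g : pprod d' m = g := hCor g hgG d' hrun'
  have hd'b : d' (j' + 1) = b (j' + 1) :=
    factor_unique hlt hCL le_rfl hd'CL hbCL (by rw [hd'g, hbg]) (j' + 1) (by omega) (by omega)
  have : d' (j' + 1) = 1 := by
    rw [hag' (j' + 1) le_rfl]
    simp [hd₀def]
  rw [this] at hd'b
  exact hbj hd'b.symm

end Main6
end GroupCode

namespace GroupCode
section Main7
variable {V : Type*} [NormedAddCommGroup V] [InnerProductSpace ℂ V]
variable {G : Subgroup (Iso V)} {x₀ : V} {m : ℕ} {Gs : ℕ → Subgroup (Iso V)}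
  {CL : ℕ → Set (Iso V)}

theorem noise_correct (hGfin : (G : Set (Iso V)).Finite)
    (hfull : Stab x₀ G = ({1} : Set (Iso V)))
    (hnontriv : ∃ g ∈ G, g x₀ ≠ x₀)
    (hG0 : Gs 0 = ⊥) (hGm : Gs m = G) (hlt : ∀ k < m, Gs k < Gs (k + 1))
    (hCL : ∀ k < m, IsCosetLeaders (Gs k) (Gs (k + 1)) (CL (k + 1)))
    (hCor : ∀ g ∈ G, ∀ d : ℕ → Iso V, IsGreedyRun x₀ CL m (g⁻¹ x₀) d → pprod d m = g) :
    ∃ δ > (0 : ℝ), ∀ g ∈ G, ∀ r : V, ‖r - g⁻¹ x₀‖ < δ →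
      ∀ d : ℕ → Iso V, IsGreedyRun x₀ CL m r d → pprod d m = g := by
  have hMin := min_of_correct hGfin hfull hG0 hGm hlt hCL hCor
  have hGsG : ∀ {j : ℕ}, j ≤ m → Gs j ≤ G := fun hj => hGm ▸ chain_le hlt hj le_rfl
  -- minimal positive gap between distinct distance values
  set T : Set (Iso V × Iso V) :=
    {p | p.1 ∈ G ∧ p.2 ∈ G ∧ ‖p.1 x₀ - x₀‖ < ‖p.2 x₀ - x₀‖} with hTdef
  have hTfin : T.Finite := (hGfin.prod hGfin).subset (fun p hp => ⟨hp.1, hp.2.1⟩)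
  have hTne : T.Nonempty := by
    obtain ⟨g₀, hg₀G, hg₀⟩ := hnontriv
    refine ⟨(1, g₀), Subgroup.one_mem _, hg₀G, ?_⟩
    have h0 : ‖(1 : Iso V) x₀ - x₀‖ = 0 := by
      rw [show (1 : Iso V) x₀ = x₀ from rfl, sub_self, norm_zero]
    rw [h0, norm_pos_iff, sub_ne_zero]
    exact hg₀
  obtain ⟨p₀, hp₀, hp₀min⟩ :=
    Set.exists_min_image T (fun p => ‖p.2 x₀ - x₀‖ - ‖p.1 x₀ - x₀‖) hTfin hTne
  set γ : ℝ := ‖p₀.2 x₀ - x₀‖ - ‖p₀.1 x₀ - x₀‖ with hγdef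
  have hγpos : 0 < γ := sub_pos.2 hp₀.2.2
  have hgap : ∀ a b : Iso V, a ∈ G → b ∈ G →
      ‖a x₀ - x₀‖ < ‖b x₀ - x₀‖ → ‖a x₀ - x₀‖ + γ ≤ ‖b x₀ - x₀‖ := by
    intro a b ha hb hab
    have := hp₀min (a, b) ⟨ha, hb, hab⟩
    simp only at this
    linarith
  refine ⟨γ / 2, by linarith, ?_⟩
  intro g hg r hr d hd
  obtain ⟨b, hb, -, hbg⟩ := factor_exists hCL hG0 le_rfl g (hGm ▸ hg)
  have key : ∀ k ≤ m, ∀ i, 1 ≤ i → i ≤ k → d i = b i := by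
    intro k
    induction k with
    | zero => intro _ i h1 h2; omega
    | succ k ih =>
      intro hk i h1 h2
      have ihk : ∀ i, 1 ≤ i → i ≤ k → d i = b i := ih (by omega)
      rcases Nat.lt_or_ge i (k + 1) with hik | hik
      · exact ihk i h1 (by omega)
      have hieq : i = k + 1 := by omega
      subst hieq
      have hpp : pprod d k = pprod b k := pprod_congr ihk
      obtain ⟨hdCL, hdmin⟩ := hd k (by omega)
      -- exact point and noisy point
      have hAg : pprodRange b k m * pprod b k = g := by
        rw [pprodRange_mul_pprod b (by omega), hbg]
      have hptex : pprod b k * g⁻¹ = (pprodRange b k m)⁻¹ := by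
        rw [← hAg]; group
      have hxk : (pprod b k) (g⁻¹ x₀) = (pprodRange b k m)⁻¹ x₀ := by
        calc (pprod b k) (g⁻¹ x₀) = (pprod b k * g⁻¹) x₀ := rfl
          _ = (pprodRange b k m)⁻¹ x₀ := by rw [hptex]
      have hz : ‖(pprod d k) r - (pprodRange b k m)⁻¹ x₀‖ < γ / 2 := by
        rw [hpp, ← hxk, ← map_sub, (pprod b k).norm_map]
        exact hr
      by_contra hcon
      -- strict gap at the exact point
      have hstrict := strict_min hfull hGm hlt hCL hMin hb (show k < m by omega) hdCL hcon
      have hu1G : (pprodRange b (k+1) m)⁻¹ ∈ G :=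
        Subgroup.inv_mem _ (hGm ▸ pprodRange_mem hlt hCL le_rfl
          (fun i u v => hb i (by omega) v))
      have hu2G : d (k+1) * (pprodRange b k m)⁻¹ ∈ G := by
        refine Subgroup.mul_mem _ ?_ (Subgroup.inv_mem _ (hGm ▸ pprodRange_mem hlt hCL le_rfl
          (fun i u v => hb i (by omega) v)))
        exact hGsG (by omega) (CL_subset hCL (by omega) (by omega) hdCL)
      have hgap' := hgap _ _ hu1G hu2G hstrict
      -- norms at the noisy point
      have hsplit : pprodRange b k m = pprodRange b (k+1) m * b (k+1) :=
        pprodRange_succ_bot b (by omega)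
      have hbx : (b (k+1)) ((pprodRange b k m)⁻¹ x₀) = (pprodRange b (k+1) m)⁻¹ x₀ := by
        have hx : b (k+1) * (pprodRange b k m)⁻¹ = (pprodRange b (k+1) m)⁻¹ := by
          rw [hsplit]; group
        calc (b (k+1)) ((pprodRange b k m)⁻¹ x₀)
            = (b (k+1) * (pprodRange b k m)⁻¹) x₀ := rfl
          _ = (pprodRange b (k+1) m)⁻¹ x₀ := by rw [hx]
      have hex : (d (k+1)) ((pprodRange b k m)⁻¹ x₀)
          = (d (k+1) * (pprodRange b k m)⁻¹) x₀ := rfl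
      set z := (pprod d k) r with hzdef
      set xk := (pprodRange b k m)⁻¹ x₀ with hxkdef
      have ht1 : ‖(d (k+1)) xk - x₀‖ ≤ ‖(d (k+1)) xk - (d (k+1)) z‖ + ‖(d (k+1)) z - x₀‖ := by
        have := dist_triangle ((d (k+1)) xk) ((d (k+1)) z) x₀
        simpa [dist_eq_norm] using this
      have ht1' : ‖(d (k+1)) xk - (d (k+1)) z‖ = ‖z - xk‖ := by
        rw [← map_sub, (d (k+1)).norm_map, norm_sub_rev]
      have ht2 : ‖(b (k+1)) z - x₀‖ ≤ ‖(b (k+1)) z - (b (k+1)) xk‖ + ‖(b (k+1)) xk - x₀‖ := by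
        have := dist_triangle ((b (k+1)) z) ((b (k+1)) xk) x₀
        simpa [dist_eq_norm] using this
      have ht2' : ‖(b (k+1)) z - (b (k+1)) xk‖ = ‖z - xk‖ := by
        rw [← map_sub, (b (k+1)).norm_map]
      have hgreedy := hdmin (b (k+1)) (hb (k+1) (by omega) (by omega))
      rw [hex] at ht1 ht1'
      rw [hbx] at ht2 ht2'
      linarith [hz, hgap', ht1, ht1', ht2, ht2', hgreedy]
  have := key m le_rfl
  rw [pprod_congr (d' := b) (fun i u v => this i u v), hbg]

end Main7
end GroupCode


open GroupCode in
/-- **Theorem (Statement 4).** Correct decoding with no noise is equivalent to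
minimality of all induced coset leaders for `G` over each `G_k`; moreover, when these
hold the algorithm decodes correctly with some noise. -/
theorem correct_decoding_iff_minimal_induced
    {V : Type*} [NormedAddCommGroup V] [InnerProductSpace ℂ V] [FiniteDimensional ℂ V]
    (G : Subgroup (Iso V)) (hGfin : (G : Set (Iso V)).Finite)
    (x₀ : V) (hx₀ : ‖x₀‖ = 1)
    (hfull : Stab x₀ G = ({1} : Set (Iso V)))
    (hnontriv : ∃ g ∈ G, g x₀ ≠ x₀)
    (m : ℕ) (hm : 1 ≤ m)
    (Gs : ℕ → Subgroup (Iso V)) (CL : ℕ → Set (Iso V))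
    (hG0 : Gs 0 = ⊥) (hGm : Gs m = G)
    (hlt : ∀ k < m, Gs k < Gs (k + 1))
    (hCL : ∀ k < m, IsCosetLeaders (Gs k) (Gs (k + 1)) (CL (k + 1))) :
    ((∀ g ∈ G, ∀ d : ℕ → Iso V,
        IsGreedyRun x₀ CL m (g⁻¹ x₀) d → pprod d m = g) ↔
      (∀ k, 1 ≤ k → k < m → ∀ cs : ℕ → Iso V,
        (∀ i, k < i → i ≤ m → cs i ∈ CL i) → Minimal x₀ (Gs k) (pprodRange cs k m))) ∧
    ((∀ g ∈ G, ∀ d : ℕ → Iso V,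
        IsGreedyRun x₀ CL m (g⁻¹ x₀) d → pprod d m = g) →
      ∃ δ > (0 : ℝ), ∀ g ∈ G, ∀ r : V, ‖r - g⁻¹ x₀‖ < δ →
        ∀ d : ℕ → Iso V, IsGreedyRun x₀ CL m r d → pprod d m = g) := by
  refine ⟨⟨min_of_correct hGfin hfull hG0 hGm hlt hCL,
    correct_of_min hfull hG0 hGm hlt hCL⟩, ?_⟩
  intro hCor
  exact noise_correct hGfin hfull hnontriv hG0 hGm hlt hCL hCor
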